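/- Let K be a field with char K ∤ n containing μ_n(K) and a root of T^4 + 4, let f ∈ K×, d the maximal divisor of n such that f = g^d for some g ∈ K, and n' = n/d. Then the ring K[T]/(T^n − f) is isomorphic as a K-algebra to the product ∏_{ζ ∈ μ_d(K)} K[T]/(T^{n'} − ζg), where each factor is a field; in particular K[T]/(T^n − f) is reduced, and it is an integral domain if and only if d = 1. -/

import Mathlib

open Polynomial

open IntermediateField

universe u

theorem aux_irred : ∀ (m : ℕ), m ≠ 0 → ∀ (K : Type u) [Field K], ∀ (ζ : K),
    IsPrimitiveRoot ζ m → ∀ (c : K), (∀ p : ℕ, p.Prime → p ∣ m → ∀ b : K, b ^ p ≠ c) →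
    Irreducible (X ^ m - C c) := by
  intro m
  induction m using induction_on_primes with
  | zero => exact fun h => absurd rfl h
  | one => intro _ K _ ζ _ c _; simpa using irreducible_X_sub_C c
  | prime_mul p q hp IH =>
    intro hpq K _ ζ hζ c hc
    have hq : q ≠ 0 := fun h => hpq (by simp [h])
    rw [mul_comm]
    apply X_pow_mul_sub_C_irreducible
      (X_pow_sub_C_irreducible_of_prime hp (hc p hp (dvd_mul_right _ _)))
    intro E _ _ x hx
    have hint : IsIntegral K x := not_not.mp fun h ↦ by
      simpa only [degree_zero, degree_X_pow_sub_C hp.pos,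
        WithBot.natCast_ne_bot] using congr_arg degree (hx.symm.trans (dif_neg h))
    have hζq : IsPrimitiveRoot (algebraMap K K⟮x⟯ (ζ ^ p)) q :=
      (hζ.pow (Nat.pos_of_ne_zero hpq) rfl).map_of_injective (algebraMap K _).injective
    apply IH hq _ _ hζq
    intro r hr hrq b hb
    have key : (Algebra.norm K b) ^ r = (-1) ^ (p + 1) * c := by
      rw [← map_pow, hb, ← IntermediateField.adjoin.powerBasis_gen hint,
        Algebra.PowerBasis.norm_gen_eq_coeff_zero_minpoly]
      simp [minpoly_gen, hx, hp.ne_zero.symm, pow_succ]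
    rcases hr.eq_two_or_odd' with rfl | hodd
    · rcases hp.eq_two_or_odd' with rfl | hpodd
      · obtain ⟨t, rfl⟩ := hrq
        have hi : IsPrimitiveRoot (ζ ^ t) 4 := hζ.pow (Nat.pos_of_ne_zero hpq) (by ring)
        have hi2 : (ζ ^ t) ^ 2 = -1 :=
          (hi.pow (by norm_num) (by norm_num : 4 = 2 * 2)).eq_neg_one_of_two_right
        exact hc 2 hr ⟨2 * t, by ring⟩ ((ζ ^ t) * Algebra.norm K b)
          (by rw [mul_pow, hi2, key]; ring)
      · exact hc 2 hr (Dvd.dvd.mul_left hrq p) (Algebra.norm K b)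
          (by rw [key, (hpodd.add_one).neg_one_pow, one_mul])
    · refine hc r hr (Dvd.dvd.mul_left hrq p) ((-1) ^ (p + 1) * Algebra.norm K b) ?_
      rw [mul_pow, key, ← mul_assoc, ← pow_mul, ← pow_add]
      have hev : Even ((p + 1) * r + (p + 1)) := by
        rcases Nat.even_or_odd (p + 1) with he | ho
        · exact (he.mul_right r).add he
        · exact (ho.mul hodd).add_odd ho
      rw [hev.neg_one_pow, one_mul]


/-- With `K`, `n`, `f`, `d`, `g`, `n' = n/d` as in the decomposition lemma, `K[T]/(Tⁿ - f)` is
isomorphic as a `K`-algebra to `∏_{ζ ∈ μ_d(K)} K[T]/(T^{n'} - ζg)`, each factor is a field;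
in particular `K[T]/(Tⁿ - f)` is reduced, and it is a domain iff `d = 1`. -/
theorem stmt_7 (K : Type*) [Field K] (n : ℕ) (hn : 0 < n)
    (hchar : ¬ (ringChar K ∣ n)) (hμ : ∃ ζ : K, IsPrimitiveRoot ζ n)
    (hy : ∃ y : K, y ^ 4 = -4)
    (f : K) (hf : f ≠ 0) (d : ℕ) (hd : d ∣ n) (g : K) (hg : g ^ d = f)
    (hmax : ∀ e : ℕ, e ∣ n → (∃ h : K, h ^ e = f) → e ≤ d)
    (n' : ℕ) (hn' : n = d * n') :
    Nonempty (AdjoinRoot (X ^ n - C f) ≃ₐ[K]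
        ((ζ : {ζ : K // ζ ^ d = 1}) → AdjoinRoot (X ^ n' - C ((ζ : K) * g)))) ∧
      (∀ ζ : {ζ : K // ζ ^ d = 1}, IsField (AdjoinRoot (X ^ n' - C ((ζ : K) * g)))) ∧
      IsReduced (AdjoinRoot (X ^ n - C f)) ∧
      (IsDomain (AdjoinRoot (X ^ n - C f)) ↔ d = 1) := by
  classical
  obtain ⟨ω, hω⟩ := hμ
  have hn0 : n ≠ 0 := hn.ne'
  have hd0 : d ≠ 0 := fun h => hn0 (by simp [hn', h])
  have hn'0 : n' ≠ 0 := fun h => hn0 (by simp [hn', h])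
  have hg0 : g ≠ 0 := fun h => hf (by rw [← hg, h, zero_pow hd0])
  haveI : NeZero d := ⟨hd0⟩
  have hη : IsPrimitiveRoot (ω ^ n') d := hω.pow hn (by rw [hn', mul_comm])
  have hωd : IsPrimitiveRoot (ω ^ d) n' := hω.pow hn hn'
  set S := {ζ : K // ζ ^ d = 1} with hS
  have hirr : ∀ ζ : S, Irreducible (X ^ n' - C ((ζ : K) * g)) := by
    rintro ⟨ζ, hζ⟩
    refine aux_irred n' hn'0 K _ hωd _ ?_
    intro q hq hqn' b hb
    have hbf : b ^ (d * q) = f := by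
      rw [mul_comm d q, pow_mul, hb, mul_pow, hζ, one_mul, hg]
    have hle := hmax (d * q) (by rw [hn']; exact mul_dvd_mul_left d hqn') ⟨b, hbf⟩
    have h2 : d * 2 ≤ d * q := Nat.mul_le_mul_left d hq.two_le
    omega
  haveI hfact : ∀ ζ : S, Fact (Irreducible (X ^ n' - C ((ζ : K) * g))) :=
    fun ζ => ⟨hirr ζ⟩
  have hfield : ∀ ζ : S, IsField (AdjoinRoot (X ^ n' - C ((ζ : K) * g))) :=
    fun ζ => Field.toIsField _
  have hmem : ∀ i : ℕ, ((ω ^ n') ^ i) ^ d = 1 := fun i => by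
    rw [← pow_mul, mul_comm i d, pow_mul, hη.pow_eq_one, one_pow]
  let e : Fin d ≃ S := Equiv.ofBijective (fun i => ⟨(ω ^ n') ^ (i : ℕ), hmem i⟩)
    ⟨fun i j hij => Fin.ext (hη.pow_inj i.isLt j.isLt (Subtype.ext_iff.mp hij)),
     fun ζ => by
      obtain ⟨i, hi, hiζ⟩ := hη.eq_pow_of_pow_eq_one ζ.2
      exact ⟨⟨i, hi⟩, Subtype.ext hiζ⟩⟩
  haveI : Fintype S := Fintype.ofEquiv (Fin d) e
  have hXn : (X ^ n - C f : K[X]) = ∏ i ∈ Finset.range d, (X ^ n' - C ((ω ^ n') ^ i * g)) := by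
    have h1 : (X ^ d - C f : K[X]) = ∏ i ∈ Finset.range d, (X - C ((ω ^ n') ^ i * g)) :=
      X_pow_sub_C_eq_prod hη (Nat.pos_of_ne_zero hd0) hg
    calc (X ^ n - C f : K[X]) = (X ^ d - C f).comp (X ^ n') := by
          rw [sub_comp, pow_comp, X_comp, C_comp, ← pow_mul, mul_comm n' d, ← hn']
      _ = ∏ i ∈ Finset.range d, ((X - C ((ω ^ n') ^ i * g)).comp (X ^ n')) := by
          rw [h1, prod_comp]
      _ = ∏ i ∈ Finset.range d, (X ^ n' - C ((ω ^ n') ^ i * g)) := by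
          simp [sub_comp]
  have hprodS : (∏ ζ : S, (X ^ n' - C ((ζ : K) * g))) = X ^ n - C f := by
    rw [hXn, ← Fin.prod_univ_eq_prod_range,
      ← Equiv.prod_comp e (fun ζ : S => X ^ n' - C ((ζ : K) * g))]
    rfl
  have hmonic : ∀ ζ : S, (X ^ n' - C ((ζ : K) * g)).Monic :=
    fun ζ => monic_X_pow_sub_C _ hn'0
  have hcop : Pairwise fun ζ ξ : S =>
      IsCoprime (X ^ n' - C ((ζ : K) * g)) (X ^ n' - C ((ξ : K) * g)) := by
    intro ζ ξ hne
    rw [(hirr ζ).coprime_iff_not_dvd]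
    intro hdvd
    have hassoc := associated_of_dvd_of_natDegree_le hdvd (hmonic ξ).ne_zero
      (by rw [natDegree_X_pow_sub_C, natDegree_X_pow_sub_C])
    have heq := eq_of_monic_of_associated (hmonic ζ) (hmonic ξ) hassoc
    have hc2 : ((ζ : K) * g) = ((ξ : K) * g) := by
      have hcoeff := congrArg (fun p : K[X] => p.coeff 0) heq
      simpa [coeff_X_pow, hn'0] using hcoeff
    exact hne (Subtype.ext (mul_right_cancel₀ hg0 hc2))
  set I : S → Ideal K[X] := fun ζ => Ideal.span {X ^ n' - C ((ζ : K) * g)} with hI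
  have hIcop : Pairwise (Function.onFun IsCoprime I) := fun ζ ξ h =>
    (Ideal.isCoprime_span_singleton_iff _ _).mpr (hcop h)
  have hinf : (⨅ ζ : S, I ζ) = Ideal.span {(X ^ n - C f : K[X])} := by
    rw [hI, Ideal.iInf_span_singleton (fun i j h => hcop h), hprodS]
  let E1 : AdjoinRoot (X ^ n - C f) ≃+* ((ζ : S) → AdjoinRoot (X ^ n' - C ((ζ : K) * g))) :=
    (Ideal.quotEquivOfEq hinf.symm).trans (Ideal.quotientInfRingEquivPiQuotient I hIcop)
  have hE1comm : ∀ r : K, E1 (algebraMap K (AdjoinRoot (X ^ n - C f)) r) =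
      algebraMap K ((ζ : S) → AdjoinRoot (X ^ n' - C ((ζ : K) * g))) r := by
    intro r
    funext ζ
    show Ideal.quotientInfToPiQuotient I ((Ideal.quotEquivOfEq hinf.symm)
        (Ideal.Quotient.mk (Ideal.span {(X ^ n - C f : K[X])}) (C r))) ζ = _
    rw [Ideal.quotEquivOfEq_mk, Ideal.quotientInfToPiQuotient_mk']
    rfl
  let E : AdjoinRoot (X ^ n - C f) ≃ₐ[K]
      ((ζ : S) → AdjoinRoot (X ^ n' - C ((ζ : K) * g))) :=
    AlgEquiv.ofRingEquiv hE1comm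
  refine ⟨⟨E⟩, hfield, ?_, ?_⟩
  · exact isReduced_of_injective E1.toRingHom E1.injective
  · constructor
    · intro hdom
      haveI := hdom
      by_contra hd1
      have h1d : 1 < d := lt_of_le_of_ne (Nat.one_le_iff_ne_zero.mpr hd0) (Ne.symm hd1)
      set ζ₁ : S := ⟨1, one_pow d⟩ with hζ₁
      set ζ₂ : S := ⟨ω ^ n', by simpa using hmem 1⟩ with hζ₂
      have hne : ζ₂ ≠ ζ₁ := fun h => hη.ne_one h1d (congrArg Subtype.val h)
      let x : ∀ ζ : S, AdjoinRoot (X ^ n' - C ((ζ : K) * g)) :=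
        fun ζ => if ζ = ζ₁ then 1 else 0
      let y : ∀ ζ : S, AdjoinRoot (X ^ n' - C ((ζ : K) * g)) :=
        fun ζ => if ζ = ζ₁ then 0 else 1
      have hxy : x * y = 0 := by
        funext ζ
        by_cases h : ζ = ζ₁ <;> simp [x, y, h]
      have hx0 : x ≠ 0 := fun h => one_ne_zero (α := AdjoinRoot (X ^ n' - C ((ζ₁ : K) * g)))
        (by simpa [x] using congrFun h ζ₁)
      have hy0 : y ≠ 0 := fun h => one_ne_zero (α := AdjoinRoot (X ^ n' - C ((ζ₂ : K) * g)))
        (by simpa [y, hne] using congrFun h ζ₂)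
      have h0 : E.symm x * E.symm y = 0 := by rw [← map_mul, hxy, map_zero]
      rcases mul_eq_zero.mp h0 with h | h
      · exact hx0 (E.symm.injective (by rw [h, map_zero]))
      · exact hy0 (E.symm.injective (by rw [h, map_zero]))
    · intro hd1
      subst hd1
      have hirr1 : Irreducible (X ^ n - C f) := by
        refine aux_irred n hn0 K _ hω _ ?_
        intro q hq hqn b hb
        exact absurd (hmax q hqn ⟨b, hb⟩) hq.one_lt.not_ge
      haveI := Fact.mk hirr1
      infer_instance
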